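/- Let k > 0, c0 > 0, c > 0 be real with (c − c0)² > k², and set β = 2ck/((c − c0)² − k²). For ψ > 0 define κ(ψ) = c·tanh(ψ) and α(ψ) = sqrt(((c − c0)² − (κ(ψ) + k)²)/((c − c0)² − (κ(ψ) − k)²)). Then lim_{ψ → 0⁺} (α(ψ) − 1)/ψ = −β. -/

import Mathlib

/-- leading-order expansion `α = 1 − βψ + O(ψ²)` of the interaction
coefficient of the 2-periodic solution of the Benjamin–Ono equation in the
degeneration limit `ψ → 0⁺` with `κ = c·tanh ψ`:
`lim_{ψ → 0⁺} (α(ψ) − 1)/ψ = −β` with `β = 2ck/((c − c0)² − k²)`. -/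
theorem alpha_expansion_limit (k c0 c β : ℝ) (hk : 0 < k) (hc0 : 0 < c0) (hc : 0 < c)
    (hcon : (c - c0) ^ 2 > k ^ 2)
    (hβ : β = 2 * c * k / ((c - c0) ^ 2 - k ^ 2))
    (κ α : ℝ → ℝ)
    (hκ : ∀ ψ : ℝ, κ ψ = c * Real.tanh ψ)
    (hα : ∀ ψ : ℝ, α ψ =
      Real.sqrt (((c - c0) ^ 2 - (κ ψ + k) ^ 2) / ((c - c0) ^ 2 - (κ ψ - k) ^ 2))) :
    Filter.Tendsto (fun ψ : ℝ => (α ψ - 1) / ψ)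
      (nhdsWithin 0 (Set.Ioi 0)) (nhds (-β)) := by
  have hA : (c - c0) ^ 2 - k ^ 2 ≠ 0 := by nlinarith
  -- derivative of tanh at 0 is 1
  have htanh : HasDerivAt Real.tanh 1 0 := by
    have hs := Real.hasDerivAt_sinh 0
    have hcsh := Real.hasDerivAt_cosh 0
    have hne : Real.cosh 0 ≠ 0 := by simp [Real.cosh_zero]
    have h := hs.div hcsh hne
    have : (fun x => Real.sinh x / Real.cosh x) = Real.tanh := by
      funext x; rw [Real.tanh_eq_sinh_div_cosh]
    rw [show (Real.sinh / Real.cosh) = Real.tanh from this] at h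
    simpa [Real.sinh_zero, Real.cosh_zero] using h
  have hκd : HasDerivAt κ c 0 := by
    have : HasDerivAt (fun ψ => c * Real.tanh ψ) (c * 1) 0 := htanh.const_mul c
    have he : (fun ψ => c * Real.tanh ψ) = κ := by funext x; rw [hκ]
    rw [he] at this; simpa using this
  have hκ0 : κ 0 = 0 := by simp [hκ]
  -- derivative of the inner quotient at 0
  have hnum : HasDerivAt (fun ψ => (c - c0) ^ 2 - (κ ψ + k) ^ 2)
      (-(2 * (κ 0 + k) * c)) 0 := by
    have := ((hκd.add_const k).pow 2).const_sub ((c - c0) ^ 2)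
    simpa [mul_comm, mul_assoc, mul_left_comm] using this
  have hden : HasDerivAt (fun ψ => (c - c0) ^ 2 - (κ ψ - k) ^ 2)
      (-(2 * (κ 0 - k) * c)) 0 := by
    have := ((hκd.sub_const k).pow 2).const_sub ((c - c0) ^ 2)
    simpa [mul_comm, mul_assoc, mul_left_comm] using this
  have hden0 : (c - c0) ^ 2 - (κ 0 - k) ^ 2 ≠ 0 := by
    rw [hκ0]; intro h; apply hA; nlinarith
  have hg : HasDerivAt (fun ψ => ((c - c0) ^ 2 - (κ ψ + k) ^ 2) /
      ((c - c0) ^ 2 - (κ ψ - k) ^ 2))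
      ((-(2 * (κ 0 + k) * c) * ((c - c0) ^ 2 - (κ 0 - k) ^ 2) -
        ((c - c0) ^ 2 - (κ 0 + k) ^ 2) * (-(2 * (κ 0 - k) * c))) /
        ((c - c0) ^ 2 - (κ 0 - k) ^ 2) ^ 2) 0 := hnum.div hden hden0
  have hg0 : ((c - c0) ^ 2 - (κ 0 + k) ^ 2) / ((c - c0) ^ 2 - (κ 0 - k) ^ 2) = 1 := by
    rw [hκ0]; simp only [zero_add, zero_sub, neg_sq]; exact div_self hA
  have hαd : HasDerivAt α (-β) 0 := by
    have h := hg.sqrt (by rw [hg0]; norm_num)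
    have he : (fun ψ => Real.sqrt (((c - c0) ^ 2 - (κ ψ + k) ^ 2) /
        ((c - c0) ^ 2 - (κ ψ - k) ^ 2))) = α := by funext x; rw [hα]
    rw [he] at h
    convert h using 1
    rw [hg0, hκ0, hβ, Real.sqrt_one]
    rw [hκ0] at hden0
    field_simp
    ring
  have hslope := hasDerivAt_iff_tendsto_slope.mp hαd
  have hα0 : α 0 = 1 := by rw [hα, hg0, Real.sqrt_one]
  have hmono : nhdsWithin (0:ℝ) (Set.Ioi 0) ≤ nhdsWithin 0 {(0:ℝ)}ᶜ :=
    nhdsWithin_mono _ (fun x hx => ne_of_gt hx)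
  have := hslope.mono_left hmono
  refine this.congr' ?_
  filter_upwards [self_mem_nhdsWithin] with x hx
  simp [slope, hα0, div_eq_inv_mul]
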